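/- Let d ≥ 1, let 0 ≤ L ≤ L̄ with L̄ > 0, let θ ≥ 1, s₀ ≥ 0, let (g_k)_{k≥0} be vectors in ℝ^d with ‖g_k‖ ≤ Ld for all k, let (r̄_k)_{k≥0} be a positive nondecreasing sequence, and let ζ ∈ ℕ ∪ {∞} be such that r̄_k ≤ 3 s₀ for all k < ζ. Define G_{−1} = 0, G_k = Σ_{i=0}^{k} ‖g_i‖², G'_k = 8⁴ θ (log(k+2)+1)² (G_{k−1} + 16 θ d² L̄²), η̃_k = (r̄_k / √(G'_k)) · 1[k < ζ], and μ_k = d r̄_k / (k+1)². Let f : ℝ^d → ℝ be convex and L-Lipschitz, let X ⊆ ℝ^d, let x★ ∈ X satisfy f(x★) ≤ f(x) for all x ∈ X, and let x_k ∈ X for all k. Then for every t ≥ 0: Σ_{k=0}^{t} η̃_k ⟨∇f_{μ_k}(x_k), x★ − x_k⟩ ≤ s₀² / 4. -/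

import Mathlib

open MeasureTheory Metric Finset
open scoped RealInnerProductSpace

/-- The uniform probability measure on the closed Euclidean unit ball in `ℝ^d`. -/
noncomputable def ballUniform (d : ℕ) : Measure (EuclideanSpace ℝ (Fin d)) :=
  (volume (Metric.closedBall (0 : EuclideanSpace ℝ (Fin d)) 1))⁻¹ •
    volume.restrict (Metric.closedBall 0 1)

/-- The ball-smoothed function `f_μ(x) = E_{u ∼ U(B^d)} [f (x + μ u)]`. -/
noncomputable def smoothed (d : ℕ) (f : EuclideanSpace ℝ (Fin d) → ℝ) (μ : ℝ)
    (x : EuclideanSpace ℝ (Fin d)) : ℝ :=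
  ∫ u, f (x + μ • u) ∂(ballUniform d)

/-- The uniform (rotation-invariant) probability measure on the unit sphere `S^{d-1}`,
realized as the pushforward of the uniform measure on the unit ball under radial
normalization `u ↦ u / ‖u‖`. -/
noncomputable def sphereUniform (d : ℕ) : Measure (EuclideanSpace ℝ (Fin d)) :=
  (ballUniform d).map (fun u => ‖u‖⁻¹ • u)

lemma convex_grad_ineq {E : Type*} [NormedAddCommGroup E] [InnerProductSpace ℝ E]
    [CompleteSpace E] (g : E → ℝ) (hg : ConvexOn ℝ Set.univ g) (x y : E)
    (hdiff : DifferentiableAt ℝ g x) :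
    ⟪gradient g x, y - x⟫ ≤ g y - g x := by
  set v := y - x with hv
  have hF : HasFDerivAt g (InnerProductSpace.toDual ℝ E (gradient g x)) (x + (0:ℝ) • v) := by
    simpa using hdiff.hasGradientAt.hasFDerivAt
  have hline : HasDerivAt (fun t : ℝ => x + t • v) v 0 := by
    simpa using ((hasDerivAt_id (0:ℝ)).smul_const v).const_add x
  have hφ : HasDerivAt (fun t : ℝ => g (x + t • v)) (⟪gradient g x, v⟫) 0 := by
    simpa [InnerProductSpace.toDual_apply_apply, Function.comp_def] using hF.comp_hasDerivAt (0:ℝ) hline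
  have htend : Filter.Tendsto (slope (fun t : ℝ => g (x + t • v)) 0) (nhdsWithin 0 (Set.Ioi 0))
      (nhds (⟪gradient g x, v⟫)) := by
    have := hasDerivAt_iff_tendsto_slope.1 hφ
    exact this.mono_left (nhdsWithin_mono _ (fun t ht => ne_of_gt ht))
  refine le_of_tendsto htend ?_
  filter_upwards [Ioc_mem_nhdsGT_of_mem (Set.left_mem_Ico.2 zero_lt_one)] with t ht
  obtain ⟨ht0, ht1⟩ := ht
  have hcomb : x + t • v = (1 - t) • x + t • y := by
    rw [hv]; module
  have hle : g (x + t • v) ≤ (1 - t) * g x + t * g y := by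
    rw [hcomb]
    exact hg.2 (Set.mem_univ x) (Set.mem_univ y) (by linarith) (le_of_lt ht0) (by ring)
  have hsl : slope (fun t : ℝ => g (x + t • v)) 0 t = (g (x + t • v) - g x) / t := by
    simp [slope_def_field, div_eq_inv_mul]
  rw [hsl, div_le_iff₀ ht0]
  nlinarith

section
variable {d : ℕ}

lemma euclid_nontrivial (hd : 1 ≤ d) : Nontrivial (EuclideanSpace ℝ (Fin d)) := by
  refine nontrivial_of_ne (EuclideanSpace.single ⟨0, hd⟩ (1:ℝ)) 0 ?_
  intro h
  have := congrArg (fun z => ‖z‖) h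
  simp [EuclideanSpace.norm_single] at this

lemma ball_vol_pos (hd : 1 ≤ d) :
    0 < volume (Metric.closedBall (0 : EuclideanSpace ℝ (Fin d)) 1) := by
  haveI := euclid_nontrivial hd
  exact measure_closedBall_pos volume 0 one_pos

lemma ball_vol_ne_top : volume (Metric.closedBall (0 : EuclideanSpace ℝ (Fin d)) 1) ≠ ⊤ :=
  (measure_closedBall_lt_top).ne

lemma ballUniform_prob (hd : 1 ≤ d) : IsProbabilityMeasure (ballUniform d) := by
  constructor
  rw [ballUniform, Measure.smul_apply, Measure.restrict_apply MeasurableSet.univ,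
    Set.univ_inter, smul_eq_mul]
  exact ENNReal.inv_mul_cancel (ball_vol_pos (d:=d) hd).ne' ball_vol_ne_top

lemma ballUniform_ae_norm_le : ∀ᵐ u ∂(ballUniform d), ‖u‖ ≤ 1 := by
  rw [ballUniform]
  refine Measure.ae_smul_measure ?_ _
  filter_upwards [ae_restrict_mem measurableSet_closedBall] with u hu
  simpa [mem_closedBall_zero_iff] using hu

lemma integrable_comp (hd : 1 ≤ d) {f : EuclideanSpace ℝ (Fin d) → ℝ} (hf : Continuous f)
    (x : EuclideanSpace ℝ (Fin d)) (c : ℝ) :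
    Integrable (fun u => f (x + c • u)) (ballUniform d) := by
  have hcont : Continuous fun u : EuclideanSpace ℝ (Fin d) => f (x + c • u) :=
    hf.comp (continuous_const.add (continuous_id.const_smul c))
  have h1 : IntegrableOn (fun u : EuclideanSpace ℝ (Fin d) => f (x + c • u))
      (Metric.closedBall 0 1) volume :=
    hcont.continuousOn.integrableOn_compact (isCompact_closedBall 0 1)
  exact h1.smul_measure (ENNReal.inv_ne_top.2 (ball_vol_pos (d:=d) hd).ne')

lemma smoothed_convex (hd : 1 ≤ d) {f : EuclideanSpace ℝ (Fin d) → ℝ} (hf : Continuous f)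
    (hconv : ConvexOn ℝ Set.univ f) (c : ℝ) :
    ConvexOn ℝ Set.univ (smoothed d f c) := by
  refine ⟨convex_univ, fun x _ y _ a b ha hb hab => ?_⟩
  simp only [smul_eq_mul]
  have hix := integrable_comp hd hf x c
  have hiy := integrable_comp hd hf y c
  have hiz := integrable_comp hd hf (a • x + b • y) c
  calc smoothed d f c (a • x + b • y)
      ≤ ∫ u, (a * f (x + c • u) + b * f (y + c • u)) ∂(ballUniform d) := by
        refine integral_mono hiz ((hix.const_mul a).add (hiy.const_mul b)) (fun u => ?_)
        have hcomb : a • x + b • y + c • u = a • (x + c • u) + b • (y + c • u) := by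
          have h1 : a • x + b • y + c • u = a • x + b • y + (a + b) • (c • u) := by
            rw [hab, one_smul]
          rw [h1]; module
        rw [hcomb]
        exact hconv.2 (Set.mem_univ _) (Set.mem_univ _) ha hb hab
    _ = a * smoothed d f c x + b * smoothed d f c y := by
        rw [integral_add (hix.const_mul a) (hiy.const_mul b), integral_const_mul,
          integral_const_mul]
        rfl

lemma smoothed_close (hd : 1 ≤ d) {f : EuclideanSpace ℝ (Fin d) → ℝ} (hf : Continuous f)
    {L : ℝ} (hL : 0 ≤ L) (hlip : ∀ x y, |f x - f y| ≤ L * ‖x - y‖)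
    (x : EuclideanSpace ℝ (Fin d)) (c : ℝ) :
    |smoothed d f c x - f x| ≤ L * |c| := by
  haveI := ballUniform_prob (d:=d) hd
  have hint := integrable_comp hd hf x c
  have hsub : smoothed d f c x - f x = ∫ u, (f (x + c • u) - f x) ∂(ballUniform d) := by
    rw [integral_sub hint (integrable_const _), integral_const]
    simp [smoothed]
  rw [hsub]
  have := norm_integral_le_of_norm_le_const (μ := ballUniform d)
    (f := fun u => f (x + c • u) - f x) (C := L * |c|) ?_
  · simpa using this
  · filter_upwards [ballUniform_ae_norm_le (d := d)] with u hu
    have h1 : |f (x + c • u) - f x| ≤ L * ‖c • u‖ := by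
      have := hlip (x + c • u) x
      simpa using this
    have h2 : ‖c • u‖ ≤ |c| := by
      rw [norm_smul, Real.norm_eq_abs]
      calc |c| * ‖u‖ ≤ |c| * 1 := mul_le_mul_of_nonneg_left hu (abs_nonneg c)
        _ = |c| := mul_one _
    calc ‖f (x + c • u) - f x‖ = |f (x + c • u) - f x| := rfl
      _ ≤ L * ‖c • u‖ := h1
      _ ≤ L * |c| := mul_le_mul_of_nonneg_left h2 hL

end

lemma sum_inv_sq_le (n : ℕ) : ∑ k ∈ Finset.range n, (1:ℝ)/((k:ℝ)+1)^2 ≤ 2 := by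
  have key : ∀ m : ℕ, ∑ k ∈ Finset.range (m+1), (1:ℝ)/((k:ℝ)+1)^2 ≤ 2 - 1/((m:ℝ)+1) := by
    intro m
    induction m with
    | zero => norm_num
    | succ p ih =>
      rw [Finset.sum_range_succ]
      have hp : (0:ℝ) < (p:ℝ)+1 := by positivity
      have hp2 : (0:ℝ) < (p:ℝ)+1+1 := by positivity
      have hstep : (1:ℝ)/(((p:ℝ)+1)+1)^2 ≤ 1/((p:ℝ)+1) - 1/((p:ℝ)+1+1) := by
        rw [div_sub_div _ _ (ne_of_gt hp) (ne_of_gt hp2),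
          div_le_div_iff₀ (by positivity) (by positivity)]
        nlinarith
      push_cast
      linarith
  cases n with
  | zero => simp
  | succ m =>
    have h1 := key m
    have h2 : (0:ℝ) < 1/((m:ℝ)+1) := by positivity
    linarith

set_option maxHeartbeats 1000000 in
theorem stmt17 (d : ℕ) (hd : 1 ≤ d) (L Lbar : ℝ) (hL : 0 ≤ L) (hLLbar : L ≤ Lbar)
    (hLbar : 0 < Lbar) (θ : ℝ) (hθ : 1 ≤ θ) (s0 : ℝ) (hs0 : 0 ≤ s0)
    (g : ℕ → EuclideanSpace ℝ (Fin d)) (hg : ∀ k, ‖g k‖ ≤ L * d)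
    (rbar : ℕ → ℝ) (hrpos : ∀ k, 0 < rbar k) (hrmono : Monotone rbar)
    (ζ : ℕ∞) (hζ : ∀ k : ℕ, (k : ℕ∞) < ζ → rbar k ≤ 3 * s0)
    (G' : ℕ → ℝ)
    (hG' : ∀ k : ℕ, G' k = 8 ^ 4 * θ * (Real.log ((k : ℝ) + 2) + 1) ^ 2 *
      ((∑ i ∈ Finset.range k, ‖g i‖ ^ 2) + 16 * θ * (d : ℝ) ^ 2 * Lbar ^ 2))
    (ηt : ℕ → ℝ)
    (hηt : ∀ k : ℕ, ηt k = if (k : ℕ∞) < ζ then rbar k / Real.sqrt (G' k) else 0)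
    (μ : ℕ → ℝ) (hμ : ∀ k : ℕ, μ k = (d : ℝ) * rbar k / ((k : ℝ) + 1) ^ 2)
    (f : EuclideanSpace ℝ (Fin d) → ℝ)
    (hconv : ConvexOn ℝ Set.univ f)
    (hlip : ∀ x y, |f x - f y| ≤ L * ‖x - y‖)
    (X : Set (EuclideanSpace ℝ (Fin d)))
    (xstar : EuclideanSpace ℝ (Fin d)) (hxstar : xstar ∈ X)
    (hmin : ∀ x ∈ X, f xstar ≤ f x)
    (x : ℕ → EuclideanSpace ℝ (Fin d)) (hx : ∀ k, x k ∈ X)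
    (t : ℕ) :
    ∑ k ∈ Finset.range (t + 1),
        ηt k * ⟪gradient (smoothed d f (μ k)) (x k), xstar - x k⟫ ≤ s0 ^ 2 / 4 := by
  have hd0 : (0:ℝ) < d := by exact_mod_cast hd
  have hcont : Continuous f := by
    have : LipschitzWith (Real.toNNReal L) f := by
      refine LipschitzWith.of_dist_le_mul (fun a b => ?_)
      rw [Real.coe_toNNReal L hL, Real.dist_eq, dist_eq_norm]
      exact hlip a b
    exact this.continuous
  have key : ∀ k : ℕ, ηt k * ⟪gradient (smoothed d f (μ k)) (x k), xstar - x k⟫ ≤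
      9 * s0 ^ 2 / 128 * (1 / ((k:ℝ)+1)^2) := by
    intro k
    have hμk : 0 ≤ μ k := by
      rw [hμ k]
      exact div_nonneg (mul_nonneg hd0.le (hrpos k).le) (by positivity)
    have hηnn : 0 ≤ ηt k := by
      rw [hηt]
      split
      · exact div_nonneg (hrpos k).le (Real.sqrt_nonneg _)
      · exact le_rfl
    have hinner : ⟪gradient (smoothed d f (μ k)) (x k), xstar - x k⟫ ≤ 2 * L * μ k := by
      by_cases hdiff : DifferentiableAt ℝ (smoothed d f (μ k)) (x k)
      · have h1 := convex_grad_ineq _ (smoothed_convex hd hcont hconv (μ k)) (x k) xstar hdiff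
        have h2 := smoothed_close hd hcont hL hlip xstar (μ k)
        have h3 := smoothed_close hd hcont hL hlip (x k) (μ k)
        rw [abs_of_nonneg hμk] at h2 h3
        have h4 := hmin (x k) (hx k)
        have h2' := abs_le.1 h2
        have h3' := abs_le.1 h3
        have := h2'.1
        have := h2'.2
        have := h3'.1
        have := h3'.2
        linarith
      · rw [gradient_eq_zero_of_not_differentiableAt hdiff]
        simp only [inner_zero_left]
        exact mul_nonneg (mul_nonneg (by norm_num) hL) hμk
    have step1 : ηt k * ⟪gradient (smoothed d f (μ k)) (x k), xstar - x k⟫ ≤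
        ηt k * (2 * L * μ k) := mul_le_mul_of_nonneg_left hinner hηnn
    refine step1.trans ?_
    by_cases hkζ : (k : ℕ∞) < ζ
    · have hrb := hζ k hkζ
      have hA : 1 ≤ Real.log ((k:ℝ)+2) + 1 := by
        have : (0:ℝ) ≤ Real.log ((k:ℝ)+2) :=
          Real.log_nonneg (by linarith [Nat.cast_nonneg (α := ℝ) k])
        linarith
      have hS : 0 ≤ ∑ i ∈ Finset.range k, ‖g i‖^2 :=
        Finset.sum_nonneg fun i _ => sq_nonneg _
      have hGlb : (256*(d:ℝ)*Lbar)^2 ≤ G' k := by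
        rw [hG' k]
        set A := Real.log ((k:ℝ)+2) + 1 with hAdef
        set S := ∑ i ∈ Finset.range k, ‖g i‖^2 with hSdef
        have h1 : (1:ℝ) ≤ θ * A^2 := by nlinarith
        have hdL : (0:ℝ) ≤ (d:ℝ)^2*Lbar^2 := by positivity
        have h2 : 16*(d:ℝ)^2*Lbar^2 ≤ S + 16*θ*(d:ℝ)^2*Lbar^2 := by
          nlinarith [mul_nonneg (sub_nonneg.2 hθ) hdL]
        have h3 : 1*(16*(d:ℝ)^2*Lbar^2) ≤ (θ*A^2)*(S + 16*θ*(d:ℝ)^2*Lbar^2) :=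
          mul_le_mul h1 h2 (by positivity) (by positivity)
        nlinarith
      have hsq : 256*(d:ℝ)*Lbar ≤ Real.sqrt (G' k) := Real.le_sqrt_of_sq_le hGlb
      have hηle : ηt k ≤ rbar k / (256*(d:ℝ)*Lbar) := by
        rw [hηt, if_pos hkζ]
        exact div_le_div_of_nonneg_left (hrpos k).le (by positivity) hsq
      have hμpos : 0 ≤ 2 * L * μ k := mul_nonneg (mul_nonneg (by norm_num) hL) hμk
      refine (mul_le_mul_of_nonneg_right hηle hμpos).trans ?_
      rw [hμ k]
      have hP : (0:ℝ) < ((k:ℝ)+1)^2 := by positivity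
      have hfrac : rbar k/(256*(d:ℝ)*Lbar) * (2*L*((d:ℝ)*rbar k/(((k:ℝ)+1)^2))) =
          (L*rbar k^2/(128*Lbar)) * (1/(((k:ℝ)+1)^2)) := by
        field_simp
        ring
      rw [hfrac]
      refine mul_le_mul_of_nonneg_right ?_ (by positivity)
      rw [div_le_div_iff₀ (by positivity) (by norm_num)]
      have hr2 : rbar k^2 ≤ 9*s0^2 := by nlinarith [hrpos k]
      nlinarith [mul_le_mul hLLbar hr2 (sq_nonneg (rbar k)) hLbar.le]
    · rw [hηt k, if_neg hkζ, zero_mul]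
      positivity
  calc ∑ k ∈ Finset.range (t + 1),
        ηt k * ⟪gradient (smoothed d f (μ k)) (x k), xstar - x k⟫
      ≤ ∑ k ∈ Finset.range (t + 1), 9 * s0 ^ 2 / 128 * (1 / ((k:ℝ)+1)^2) :=
        Finset.sum_le_sum fun k _ => key k
    _ = 9 * s0 ^ 2 / 128 * ∑ k ∈ Finset.range (t + 1), (1:ℝ) / ((k:ℝ)+1)^2 := by
        rw [Finset.mul_sum]
    _ ≤ 9 * s0 ^ 2 / 128 * 2 := by
        refine mul_le_mul_of_nonneg_left (sum_inv_sq_le (t+1)) (by positivity)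
    _ ≤ s0 ^ 2 / 4 := by nlinarith [sq_nonneg s0]
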